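/- (Theorem 3.1, case x = 0, y ≥ 1.) Let 0 < β < α < 1, β < θ < 1 and β < αθ, let p_ε be the NoGeAR(1) innovation pmf and p1 the one-step transition function of the NoGeAR(1) chain, and set A = ∑_{k=1}^{∞} α^k p_ε(k) and B(x,k) as in the Chapman–Kolmogorov setup. Then for every integer y ≥ 1, the two-step ahead transition probability from state y to state 0 satisfies ∑_{k=0}^{∞} p1(y,k)·p1(k,0) = (1−αθ)·( α^y·(1−αθ+A) + ∑_{k=1}^{∞} α^k·B(k,y) ), all series being convergent. -/

import Mathlib

/-- NoGeAR(1) innovation pmf. -/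
noncomputable def pEps (α β θ : ℝ) (x : ℕ) : ℝ :=
  ((α * θ - β) / (θ - β)) * θ ^ x * (1 - θ)
    + (1 - (α * θ - β) / (θ - β)) * β ^ x * (1 - β)

lemma pEps_nonneg {α β θ : ℝ} (hβ : 0 < β) (hα : α < 1)
    (hβθ : β < θ) (hθ : θ < 1) (hβαθ : β < α * θ) (x : ℕ) :
    0 ≤ pEps α β θ x := by
  have hθ0 : 0 < θ := hβ.trans hβθ
  have hd : 0 < θ - β := by linarith
  have hl0 : 0 ≤ (α * θ - β) / (θ - β) := div_nonneg (by linarith) hd.le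
  have hl1 : (α * θ - β) / (θ - β) ≤ 1 := by
    rw [div_le_one hd]; nlinarith
  have h1 : (0:ℝ) ≤ θ ^ x := pow_nonneg hθ0.le x
  have h2 : (0:ℝ) ≤ β ^ x := pow_nonneg hβ.le x
  unfold pEps
  have h4 : (0:ℝ) ≤ 1 - θ := by linarith
  have h5 : (0:ℝ) ≤ 1 - β := by linarith
  have h6 : (0:ℝ) ≤ 1 - (α * θ - β) / (θ - β) := by linarith
  have := mul_nonneg (mul_nonneg hl0 h1) h4
  have := mul_nonneg (mul_nonneg h6 h2) h5
  linarith

lemma pEps_le {α β θ : ℝ} (hβ : 0 < β) (hα : α < 1)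
    (hβθ : β < θ) (hθ : θ < 1) (hβαθ : β < α * θ) (x : ℕ) :
    pEps α β θ x ≤ θ ^ x := by
  have hθ0 : 0 < θ := hβ.trans hβθ
  have hd : 0 < θ - β := by linarith
  have hl0 : 0 ≤ (α * θ - β) / (θ - β) := div_nonneg (by linarith) hd.le
  have hl1 : (α * θ - β) / (θ - β) ≤ 1 := by
    rw [div_le_one hd]; nlinarith
  have h1 : (0:ℝ) ≤ θ ^ x := pow_nonneg hθ0.le x
  have h2 : (0:ℝ) ≤ β ^ x := pow_nonneg hβ.le x
  have h3 : β ^ x ≤ θ ^ x := pow_le_pow_left₀ hβ.le hβθ.le x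
  unfold pEps
  nlinarith [mul_nonneg hl0 h1, mul_nonneg (sub_nonneg.2 hl1) h2]

/-- One-step transition probabilities of the NoGeAR(1) chain (Eq. (4)). -/
noncomputable def p1 (α β θ : ℝ) (y x : ℕ) : ℝ :=
  if y = 0 then
    (if x = 0 then 1 - α * θ else pEps α β θ x)
  else if x = 0 then α ^ y * (1 - α * θ)
  else
    α ^ y * pEps α β θ x
      + ∑ m ∈ Finset.Icc 1 x, ∑ j ∈ Finset.Icc 1 (min m y),
          (y.choose j : ℝ) * ((m - 1).choose (j - 1) : ℝ) *
            ((1 - α) * (1 - β)) ^ j * α ^ (y - j) * β ^ (m - j) * pEps α β θ (x - m)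

/-- The quantity `A = ∑_{k=1}^∞ α^k p_ε(k)` of Theorem 3.1. -/
noncomputable def Aconst (α β θ : ℝ) : ℝ :=
  ∑' k : ℕ, α ^ (k + 1) * pEps α β θ (k + 1)

/-- The quantity `B(x,k)` of Theorem 3.1 (for x, k ≥ 1). -/
noncomputable def Bfun (α β θ : ℝ) (x k : ℕ) : ℝ :=
  ∑ m ∈ Finset.Icc 1 x, ∑ j ∈ Finset.Icc 1 (min m k),
    (k.choose j : ℝ) * ((m - 1).choose (j - 1) : ℝ) *
      ((1 - α) * (1 - β)) ^ j * α ^ (k - j) * β ^ (m - j) * pEps α β θ (x - m)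

lemma Bfun_nonneg {α β θ : ℝ} (hβ : 0 < β) (hβα : β < α) (hα : α < 1)
    (hβθ : β < θ) (hθ : θ < 1) (hβαθ : β < α * θ) (x k : ℕ) :
    0 ≤ Bfun α β θ x k := by
  have hα0 : 0 < α := hβ.trans hβα
  apply Finset.sum_nonneg; intro m _
  apply Finset.sum_nonneg; intro j _
  have := pEps_nonneg hβ hα hβθ hθ hβαθ (x - m)
  have h1 : (0:ℝ) ≤ 1 - α := by linarith
  have h2 : (0:ℝ) ≤ 1 - β := by linarith
  positivity

lemma Bfun_le {α β θ : ℝ} (hβ : 0 < β) (hβα : β < α) (hα : α < 1)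
    (hβθ : β < θ) (hθ : θ < 1) (hβαθ : β < α * θ) (y : ℕ) (hy : 1 ≤ y) (k : ℕ) :
    Bfun α β θ k y ≤
      ((y : ℝ) * ((y:ℝ)^y / β ^ y) * (∑' m : ℕ, (m:ℝ)^y * (β/θ)^m)) * θ ^ k := by
  have hθ0 : 0 < θ := hβ.trans hβθ
  have hα0 : 0 < α := hβ.trans hβα
  have hβθ1 : β / θ < 1 := (div_lt_one hθ0).2 hβθ
  have hβθ0 : 0 ≤ β / θ := div_nonneg hβ.le hθ0.le
  have hT : Summable (fun m : ℕ => (m:ℝ)^y * (β/θ)^m) := by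
    have := summable_pow_mul_geometric_of_norm_lt_one (R := ℝ) y
      (r := β/θ) (by rw [Real.norm_eq_abs, abs_of_nonneg hβθ0]; exact hβθ1)
    simpa using this
  have hTnn : ∀ m : ℕ, 0 ≤ (m:ℝ)^y * (β/θ)^m := fun m =>
    mul_nonneg (pow_nonneg (Nat.cast_nonneg m) y) (pow_nonneg hβθ0 m)
  -- pointwise bound on each term
  have key : ∀ m ∈ Finset.Icc 1 k, ∀ j ∈ Finset.Icc 1 (min m y),
      (y.choose j : ℝ) * ((m - 1).choose (j - 1) : ℝ) *
        ((1 - α) * (1 - β)) ^ j * α ^ (y - j) * β ^ (m - j) * pEps α β θ (k - m)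
      ≤ ((y:ℝ)^y / β ^ y) * θ ^ k * ((m:ℝ)^y * (β/θ)^m) := by
    intro m hm j hj
    simp only [Finset.mem_Icc] at hm hj
    obtain ⟨hm1, hmk⟩ := hm
    obtain ⟨hj1, hjmy⟩ := hj
    have hjm : j ≤ m := le_trans hjmy (min_le_left _ _)
    have hjy : j ≤ y := le_trans hjmy (min_le_right _ _)
    have b1 : (y.choose j : ℝ) ≤ (y:ℝ) ^ y := by
      calc (y.choose j : ℝ) ≤ ((y ^ j : ℕ) : ℝ) := by
            exact_mod_cast Nat.choose_le_pow y j
        _ ≤ ((y ^ y : ℕ) : ℝ) := by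
            exact_mod_cast Nat.pow_le_pow_right hy hjy
        _ = (y:ℝ) ^ y := by push_cast; ring
    have b2 : (((m - 1).choose (j - 1) : ℕ) : ℝ) ≤ (m:ℝ) ^ y := by
      calc (((m - 1).choose (j - 1) : ℕ) : ℝ) ≤ (((m - 1) ^ (j - 1) : ℕ) : ℝ) := by
            exact_mod_cast Nat.choose_le_pow (m-1) (j-1)
        _ ≤ ((m ^ y : ℕ) : ℝ) := by
            have : (m - 1) ^ (j - 1) ≤ m ^ y :=
              le_trans (Nat.pow_le_pow_left (Nat.sub_le m 1) (j-1))
                (Nat.pow_le_pow_right hm1 (by omega))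
            exact_mod_cast this
        _ = (m:ℝ) ^ y := by push_cast; ring
    have b3 : ((1 - α) * (1 - β)) ^ j ≤ 1 :=
      pow_le_one₀ (mul_nonneg (by linarith) (by linarith))
        (by nlinarith)
    have b4 : α ^ (y - j) ≤ 1 := pow_le_one₀ hα0.le hα.le
    have b5 : β ^ (m - j) ≤ β ^ m / β ^ y := by
      rw [le_div_iff₀ (pow_pos hβ y), ← pow_add]
      exact pow_le_pow_of_le_one hβ.le (by linarith) (by omega)
    have b6 : pEps α β θ (k - m) ≤ θ ^ k / θ ^ m := by
      have : θ ^ (k - m) = θ ^ k / θ ^ m := by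
        rw [eq_div_iff (by positivity), ← pow_add]
        congr 1; omega
      rw [← this]; exact pEps_le hβ hα hβθ hθ hβαθ (k - m)
    have hp0 : 0 ≤ pEps α β θ (k - m) := pEps_nonneg hβ hα hβθ hθ hβαθ (k - m)
    have fin : (y:ℝ)^y * ((m:ℝ)^y) * 1 * 1 * (β ^ m / β ^ y) * (θ ^ k / θ ^ m)
        = ((y:ℝ)^y / β ^ y) * θ ^ k * ((m:ℝ)^y * (β/θ)^m) := by
      rw [div_pow]
      field_simp
    rw [← fin]
    have h1a : (0:ℝ) ≤ 1 - α := by linarith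
    have h1b : (0:ℝ) ≤ 1 - β := by linarith
    gcongr
  calc Bfun α β θ k y
      ≤ ∑ m ∈ Finset.Icc 1 k, (y : ℝ) *
          (((y:ℝ)^y / β ^ y) * θ ^ k * ((m:ℝ)^y * (β/θ)^m)) := by
        apply Finset.sum_le_sum
        intro m hm
        have hcard : (Finset.Icc 1 (min m y)).card ≤ y := by
          rw [Nat.card_Icc]; omega
        calc (∑ j ∈ Finset.Icc 1 (min m y),
              (y.choose j : ℝ) * ((m - 1).choose (j - 1) : ℝ) *
                ((1 - α) * (1 - β)) ^ j * α ^ (y - j) * β ^ (m - j) * pEps α β θ (k - m))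
            ≤ (Finset.Icc 1 (min m y)).card •
              (((y:ℝ)^y / β ^ y) * θ ^ k * ((m:ℝ)^y * (β/θ)^m)) := by
              apply Finset.sum_le_card_nsmul
              intro j hj; exact key m hm j hj
          _ ≤ (y : ℝ) * (((y:ℝ)^y / β ^ y) * θ ^ k * ((m:ℝ)^y * (β/θ)^m)) := by
              rw [nsmul_eq_mul]
              apply mul_le_mul_of_nonneg_right
              · exact_mod_cast hcard
              · have : (0:ℝ) ≤ (y:ℝ)^y / β ^ y := by positivity
                have := hTnn m
                positivity
    _ = ((y : ℝ) * ((y:ℝ)^y / β ^ y) * (∑ m ∈ Finset.Icc 1 k, (m:ℝ)^y * (β/θ)^m)) * θ ^ k := by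
        rw [Finset.mul_sum, Finset.sum_mul]
        exact Finset.sum_congr rfl fun m _ => by ring
    _ ≤ ((y : ℝ) * ((y:ℝ)^y / β ^ y) * (∑' m : ℕ, (m:ℝ)^y * (β/θ)^m)) * θ ^ k := by
        apply mul_le_mul_of_nonneg_right _ (pow_nonneg hθ0.le k)
        apply mul_le_mul_of_nonneg_left _ (by positivity)
        exact Summable.sum_le_tsum _ (fun m _ => hTnn m) hT

theorem two_step_y_zero (α β θ : ℝ) (hβ : 0 < β) (hβα : β < α) (hα : α < 1)
    (hβθ : β < θ) (hθ : θ < 1) (hβαθ : β < α * θ)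
    (y : ℕ) (hy : 1 ≤ y) :
    Summable (fun k : ℕ => α ^ (k + 1) * Bfun α β θ (k + 1) y) ∧
    HasSum (fun k : ℕ => p1 α β θ y k * p1 α β θ k 0)
      ((1 - α * θ) * (α ^ y * (1 - α * θ + Aconst α β θ)
        + ∑' k : ℕ, α ^ (k + 1) * Bfun α β θ (k + 1) y)) := by
  have hθ0 : 0 < θ := hβ.trans hβθ
  have hα0 : 0 < α := hβ.trans hβα
  have hαθ0 : 0 ≤ α * θ := by positivity
  have hαθ1 : α * θ < 1 := by nlinarith
  have hgeo : Summable (fun k : ℕ => (α * θ) ^ (k + 1)) := by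
    have := summable_geometric_of_lt_one hαθ0 hαθ1
    exact (summable_nat_add_iff 1).2 this
  -- Summability of α^{k+1} pEps(k+1)
  have hg1 : Summable (fun k : ℕ => α ^ (k + 1) * pEps α β θ (k + 1)) := by
    apply Summable.of_nonneg_of_le
      (fun k => mul_nonneg (pow_nonneg hα0.le _) (pEps_nonneg hβ hα hβθ hθ hβαθ _))
      (fun k => ?_) hgeo
    calc α ^ (k + 1) * pEps α β θ (k + 1)
        ≤ α ^ (k + 1) * θ ^ (k + 1) :=
          mul_le_mul_of_nonneg_left (pEps_le hβ hα hβθ hθ hβαθ _) (pow_nonneg hα0.le _)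
      _ = (α * θ) ^ (k + 1) := (mul_pow _ _ _).symm
  -- Summability of α^{k+1} Bfun(k+1, y)
  set C : ℝ := (y : ℝ) * ((y:ℝ)^y / β ^ y) * (∑' m : ℕ, (m:ℝ)^y * (β/θ)^m) with hC
  have hC0 : 0 ≤ C := by
    have : 0 ≤ ∑' m : ℕ, (m:ℝ)^y * (β/θ)^m :=
      tsum_nonneg fun m => mul_nonneg (pow_nonneg (Nat.cast_nonneg m) y)
        (pow_nonneg (div_nonneg hβ.le hθ0.le) m)
    positivity
  have hg2 : Summable (fun k : ℕ => α ^ (k + 1) * Bfun α β θ (k + 1) y) := by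
    apply Summable.of_nonneg_of_le
      (fun k => mul_nonneg (pow_nonneg hα0.le _) (Bfun_nonneg hβ hβα hα hβθ hθ hβαθ _ _))
      (fun k => ?_) (hgeo.mul_left C)
    calc α ^ (k + 1) * Bfun α β θ (k + 1) y
        ≤ α ^ (k + 1) * (C * θ ^ (k + 1)) :=
          mul_le_mul_of_nonneg_left (Bfun_le hβ hβα hα hβθ hθ hβαθ y hy (k+1))
            (pow_nonneg hα0.le _)
      _ = C * (α * θ) ^ (k + 1) := by rw [mul_pow]; ring
  refine ⟨hg2, ?_⟩
  have hy0 : y ≠ 0 := by omega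
  -- the shifted function
  have hshift : ∀ k : ℕ, p1 α β θ y (k + 1) * p1 α β θ (k + 1) 0
      = (1 - α * θ) * (α ^ y * (α ^ (k + 1) * pEps α β θ (k + 1))
          + α ^ (k + 1) * Bfun α β θ (k + 1) y) := by
    intro k
    rw [p1, p1]
    simp only [hy0, Nat.succ_ne_zero, if_false, if_true, reduceIte]
    rw [show (∑ m ∈ Finset.Icc 1 (k+1), ∑ j ∈ Finset.Icc 1 (min m y),
          (y.choose j : ℝ) * ((m - 1).choose (j - 1) : ℝ) *
            ((1 - α) * (1 - β)) ^ j * α ^ (y - j) * β ^ (m - j) * pEps α β θ (k + 1 - m))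
        = Bfun α β θ (k + 1) y from rfl]
    ring
  have hsum1 : HasSum (fun k : ℕ => p1 α β θ y (k + 1) * p1 α β θ (k + 1) 0)
      ((1 - α * θ) * (α ^ y * Aconst α β θ
        + ∑' k : ℕ, α ^ (k + 1) * Bfun α β θ (k + 1) y)) := by
    have h := ((hg1.hasSum.mul_left (α ^ y)).add hg2.hasSum).mul_left (1 - α * θ)
    rw [show Aconst α β θ = ∑' k : ℕ, α ^ (k + 1) * pEps α β θ (k + 1) from rfl,
      funext hshift]
    convert h using 2
  have hf0 : p1 α β θ y 0 * p1 α β θ 0 0 = α ^ y * (1 - α * θ) * (1 - α * θ) := by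
    rw [p1, p1]; simp [hy0]
  have h2 := (hasSum_nat_add_iff
      (f := fun k => p1 α β θ y k * p1 α β θ k 0) 1).1 hsum1
  simp only [Finset.range_one, Finset.sum_singleton] at h2
  rw [hf0] at h2
  convert h2 using 1
  · rfl
  · ring
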